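/- Let μ be a non-negative locally finite Borel measure on ℝ and let E ⊆ ℝ be measurable with 0 < μ(E) < ∞. For 0 ≤ γ < α < 1, define f := 1_E + γ·1_{E^c} and let M^μ denote the uncentered Hardy–Littlewood maximal operator with respect to μ, M^μ g(x) := sup over bounded intervals I containing x of (1/μ(I)) ∫_I |g| dμ. Then μ({x ∈ ℝ : M^μ f(x) > α}) ≤ (1 + 2(1-α)/(α-γ)) · μ(E). -/

import Mathlib

open MeasureTheory Set
open scoped ENNReal NNReal

/-- The uncentered one-dimensional Hardy–Littlewood maximal operator with respect to
a Borel measure `μ`. -/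
noncomputable def Mmu (μ : Measure ℝ) (f : ℝ → ℝ) (x : ℝ) : ℝ :=
  sSup {r : ℝ | ∃ a b : ℝ, a < b ∧ x ∈ Set.Ioo a b ∧ 0 < μ (Set.Ioo a b) ∧
    r = (μ (Set.Ioo a b)).toReal⁻¹ * ∫ y in Set.Ioo a b, |f y| ∂μ}

/-- Helper: if `x` lies in all three intervals, `a' ≤ a` and `b ≤ b''`, then the middle
interval is contained in the union of the other two. -/
lemma solyanik_helper {a b a' b' a'' b'' x : ℝ} (h : x ∈ Set.Ioo a b) (h' : x ∈ Set.Ioo a' b')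
    (h'' : x ∈ Set.Ioo a'' b'') (ha : a' ≤ a) (hb : b ≤ b'') :
    Set.Ioo a b ⊆ Set.Ioo a' b' ∪ Set.Ioo a'' b'' := by
  intro y hy
  by_cases hyb : y < b'
  · exact Or.inl ⟨lt_of_le_of_lt ha hy.1, hyb⟩
  · exact Or.inr ⟨lt_of_lt_of_le (lt_of_lt_of_le h''.1 (le_of_lt h'.2)) (not_lt.mp hyb),
      lt_of_lt_of_le hy.2 hb⟩

lemma solyanik_three_aux {a₁ b₁ a₂ b₂ a₃ b₃ x : ℝ} (hA : a₁ ≤ a₂)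
    (h₁ : x ∈ Set.Ioo a₁ b₁) (h₂ : x ∈ Set.Ioo a₂ b₂) (h₃ : x ∈ Set.Ioo a₃ b₃) :
    Set.Ioo a₁ b₁ ⊆ Set.Ioo a₂ b₂ ∪ Set.Ioo a₃ b₃ ∨
    Set.Ioo a₂ b₂ ⊆ Set.Ioo a₁ b₁ ∪ Set.Ioo a₃ b₃ ∨
    Set.Ioo a₃ b₃ ⊆ Set.Ioo a₁ b₁ ∪ Set.Ioo a₂ b₂ := by
  rcases le_total b₂ b₃ with h | h
  · exact Or.inr (Or.inl (solyanik_helper h₂ h₁ h₃ hA h))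
  · rcases le_total a₁ a₃ with h' | h'
    · exact Or.inr (Or.inr (solyanik_helper h₃ h₁ h₂ h' h))
    · rcases le_total b₁ b₂ with h'' | h''
      · exact Or.inl ((solyanik_helper h₁ h₃ h₂ h' h'').trans
          (Set.union_comm _ _ ▸ Set.Subset.rfl))
      · exact Or.inr (Or.inl ((solyanik_helper h₂ h₃ h₁ (h'.trans hA) h'').trans
          (Set.union_comm _ _ ▸ Set.Subset.rfl)))

/-- Among three open intervals containing a common point, one is contained in the
union of the other two. -/
lemma solyanik_three {a₁ b₁ a₂ b₂ a₃ b₃ x : ℝ}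
    (h₁ : x ∈ Set.Ioo a₁ b₁) (h₂ : x ∈ Set.Ioo a₂ b₂) (h₃ : x ∈ Set.Ioo a₃ b₃) :
    Set.Ioo a₁ b₁ ⊆ Set.Ioo a₂ b₂ ∪ Set.Ioo a₃ b₃ ∨
    Set.Ioo a₂ b₂ ⊆ Set.Ioo a₁ b₁ ∪ Set.Ioo a₃ b₃ ∨
    Set.Ioo a₃ b₃ ⊆ Set.Ioo a₁ b₁ ∪ Set.Ioo a₂ b₂ := by
  rcases le_total a₁ a₂ with h | h
  · exact solyanik_three_aux h h₁ h₂ h₃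
  · rcases solyanik_three_aux h h₂ h₁ h₃ with H | H | H
    · exact Or.inr (Or.inl H)
    · exact Or.inl H
    · exact Or.inr (Or.inr (H.trans (Set.union_comm _ _ ▸ Set.Subset.rfl)))

open Classical in
/-- From a finite family of open intervals one can select a subfamily with the same
union in which every point is covered at most twice. -/
lemma solyanik_mult2 {ι : Type*} (a b : ι → ℝ) (s : Finset ι) :
    ∃ t ⊆ s, (⋃ i ∈ t, Set.Ioo (a i) (b i)) = (⋃ i ∈ s, Set.Ioo (a i) (b i)) ∧
      ∀ x : ℝ, (t.filter fun i => x ∈ Set.Ioo (a i) (b i)).card ≤ 2 := by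
  induction s using Finset.strongInduction with
  | _ s ih =>
    by_cases h : ∀ x : ℝ, (s.filter fun i => x ∈ Set.Ioo (a i) (b i)).card ≤ 2
    · exact ⟨s, Finset.Subset.refl s, rfl, h⟩
    push_neg at h
    obtain ⟨x, hx⟩ := h
    obtain ⟨u, hu, hcard⟩ := Finset.exists_subset_card_eq (show 3 ≤ _ from hx)
    obtain ⟨i, j, k, hij, hik, hjk, rfl⟩ := Finset.card_eq_three.mp hcard
    have hi' := Finset.mem_filter.mp (hu (show i ∈ ({i, j, k} : Finset ι) by simp))
    have hj' := Finset.mem_filter.mp (hu (show j ∈ ({i, j, k} : Finset ι) by simp))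
    have hk' := Finset.mem_filter.mp (hu (show k ∈ ({i, j, k} : Finset ι) by simp))
    -- key step: if some interval indexed by q ∈ s is covered by the union of the others,
    -- we can delete it and recurse
    have key : ∀ q ∈ s, (Set.Ioo (a q) (b q) ⊆ ⋃ i ∈ s.erase q, Set.Ioo (a i) (b i)) →
        ∃ t ⊆ s, (⋃ i ∈ t, Set.Ioo (a i) (b i)) = (⋃ i ∈ s, Set.Ioo (a i) (b i)) ∧
          ∀ x : ℝ, (t.filter fun i => x ∈ Set.Ioo (a i) (b i)).card ≤ 2 := by
      intro q hq hsub
      obtain ⟨t, hts, huni, hmult⟩ := ih (s.erase q) (Finset.erase_ssubset hq)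
      refine ⟨t, hts.trans (Finset.erase_subset _ _), ?_, hmult⟩
      rw [huni]
      apply Set.Subset.antisymm
      · intro y hy
        simp only [Set.mem_iUnion] at hy ⊢
        obtain ⟨i, hi, hyi⟩ := hy
        exact ⟨i, (Finset.mem_erase.mp hi).2, hyi⟩
      · intro y hy
        simp only [Set.mem_iUnion] at hy ⊢
        obtain ⟨i, his, hyi⟩ := hy
        by_cases hiq : i = q
        · subst hiq
          have := hsub hyi
          simp only [Set.mem_iUnion] at this
          exact this
        · exact ⟨i, Finset.mem_erase.mpr ⟨hiq, his⟩, hyi⟩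
    have sub2 : ∀ p₁ p₂ q : ι, p₁ ∈ s → p₂ ∈ s → p₁ ≠ q → p₂ ≠ q →
        Set.Ioo (a q) (b q) ⊆ Set.Ioo (a p₁) (b p₁) ∪ Set.Ioo (a p₂) (b p₂) →
        Set.Ioo (a q) (b q) ⊆ ⋃ i ∈ s.erase q, Set.Ioo (a i) (b i) := by
      intro p₁ p₂ q hp₁ hp₂ h₁q h₂q hsub
      refine hsub.trans ?_
      intro y hy
      simp only [Set.mem_iUnion]
      rcases hy with hy | hy
      · exact ⟨p₁, Finset.mem_erase.mpr ⟨h₁q, hp₁⟩, hy⟩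
      · exact ⟨p₂, Finset.mem_erase.mpr ⟨h₂q, hp₂⟩, hy⟩
    rcases solyanik_three hi'.2 hj'.2 hk'.2 with H | H | H
    · exact key i hi'.1 (sub2 j k i hj'.1 hk'.1 hij.symm hik.symm H)
    · exact key j hj'.1 (sub2 i k j hi'.1 hk'.1 hij hjk.symm H)
    · exact key k hk'.1 (sub2 i j k hi'.1 hj'.1 hik hjk H)

open Classical in
/-- If every point is covered at most twice by the intervals of the family `t`, then the sum
of the measures of `E ∩ I` is at most twice the measure of `E ∩ ⋃ I`. -/
lemma solyanik_sum_le {ι : Type*} (μ : Measure ℝ) (E : Set ℝ) (hE : MeasurableSet E)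
    (a b : ι → ℝ) (t : Finset ι)
    (hmult : ∀ x : ℝ, (t.filter fun i => x ∈ Set.Ioo (a i) (b i)).card ≤ 2) :
    ∑ i ∈ t, μ (E ∩ Set.Ioo (a i) (b i)) ≤ 2 * μ (E ∩ ⋃ i ∈ t, Set.Ioo (a i) (b i)) := by
  set V := ⋃ i ∈ t, Set.Ioo (a i) (b i) with hV
  have hVmeas : MeasurableSet V := by
    exact MeasurableSet.biUnion t.countable_toSet fun i _ => measurableSet_Ioo
  calc ∑ i ∈ t, μ (E ∩ Set.Ioo (a i) (b i))
      = ∑ i ∈ t, ∫⁻ x, (E ∩ Set.Ioo (a i) (b i)).indicator 1 x ∂μ := by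
        refine Finset.sum_congr rfl fun i _ => ?_
        rw [lintegral_indicator_one (hE.inter measurableSet_Ioo)]
    _ = ∫⁻ x, ∑ i ∈ t, (E ∩ Set.Ioo (a i) (b i)).indicator 1 x ∂μ :=
        (lintegral_finset_sum _ fun i _ =>
          (measurable_one.indicator (hE.inter measurableSet_Ioo))).symm
    _ ≤ ∫⁻ x, (E ∩ V).indicator (fun _ => (2 : ℝ≥0∞)) x ∂μ := by
        refine lintegral_mono fun x => ?_
        by_cases hx : x ∈ E ∩ V
        · rw [Set.indicator_of_mem hx]
          calc ∑ i ∈ t, (E ∩ Set.Ioo (a i) (b i)).indicator 1 x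
              ≤ ∑ i ∈ t, (Set.Ioo (a i) (b i)).indicator 1 x :=
                Finset.sum_le_sum fun i _ =>
                  Set.indicator_le_indicator_of_subset Set.inter_subset_right
                    (fun _ => zero_le) x
            _ = ((t.filter fun i => x ∈ Set.Ioo (a i) (b i)).card : ℝ≥0∞) := by
                simp only [Set.indicator_apply, Pi.one_apply]
                rw [Finset.sum_boole]
            _ ≤ 2 := by exact_mod_cast hmult x
        · have : ∀ i ∈ t, (E ∩ Set.Ioo (a i) (b i)).indicator (1 : ℝ → ℝ≥0∞) x = 0 := by
            intro i hi
            apply Set.indicator_of_notMem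
            intro hmem
            exact hx ⟨hmem.1, Set.mem_biUnion hi hmem.2⟩
          rw [Finset.sum_eq_zero this]
          exact zero_le
    _ = 2 * μ (E ∩ V) := lintegral_indicator_const (hE.inter hVmeas) 2

/-- one-dimensional Solyanik estimate with respect to a Borel measure. -/
theorem stmt2 (μ : Measure ℝ) [IsLocallyFiniteMeasure μ]
    (E : Set ℝ) (hE : MeasurableSet E) (h0 : 0 < μ E) (h1 : μ E < ⊤)
    (α γ : ℝ) (hγ : 0 ≤ γ) (hγα : γ < α) (hα : α < 1) :
    μ {x | α < Mmu μ (fun y => E.indicator 1 y + γ * Eᶜ.indicator 1 y) x} ≤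
      ENNReal.ofReal (1 + 2 * (1 - α) / (α - γ)) * μ E := by
  classical
  set c : ℝ := (1 - α) / (α - γ) with hc
  have hαγ : 0 < α - γ := sub_pos.mpr hγα
  have hc0 : 0 ≤ c := div_nonneg (by linarith) hαγ.le
  set f : ℝ → ℝ := fun y => E.indicator 1 y + γ * Eᶜ.indicator 1 y with hf
  have hfval : ∀ y, f y = E.indicator (fun _ => 1 - γ) y + γ := by
    intro y
    by_cases hy : y ∈ E <;> simp [hf, hy, Set.indicator_of_mem, Set.indicator_of_notMem]
  have hfnonneg : ∀ y, 0 ≤ f y := by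
    intro y
    rw [hfval]
    by_cases hy : y ∈ E <;> simp [hy] <;> linarith
  -- the family of "good" intervals
  set 𝒞 : Set (ℝ × ℝ) := {p | p.1 < p.2 ∧
    μ (Set.Ioo p.1 p.2 \ E) ≤ ENNReal.ofReal c * μ (E ∩ Set.Ioo p.1 p.2)} with h𝒞
  set U : Set ℝ := ⋃ p ∈ 𝒞, Set.Ioo p.1 p.2 with hU
  -- Step A: level set is contained in U
  have hsub : {x | α < Mmu μ f x} ⊆ U := by
    intro x hx
    simp only [Set.mem_setOf_eq, Mmu] at hx
    set S := {r : ℝ | ∃ a b : ℝ, a < b ∧ x ∈ Set.Ioo a b ∧ 0 < μ (Set.Ioo a b) ∧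
      r = (μ (Set.Ioo a b)).toReal⁻¹ * ∫ y in Set.Ioo a b, |f y| ∂μ} with hS
    have hSne : S.Nonempty := by
      by_contra hne
      rw [Set.not_nonempty_iff_eq_empty] at hne
      rw [hne, Real.sSup_empty] at hx
      linarith
    obtain ⟨r, hrS, hαr⟩ := exists_lt_of_lt_csSup hSne hx
    obtain ⟨a, b, hab, hxab, hμpos, hr⟩ := hrS
    set I := Set.Ioo a b with hI
    have hIfin : μ I < ⊤ :=
      lt_of_le_of_lt (measure_mono Set.Ioo_subset_Icc_self) isCompact_Icc.measure_lt_top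
    haveI : IsFiniteMeasure (μ.restrict I) :=
      ⟨by rwa [Measure.restrict_apply_univ]⟩
    set m : ℝ := (μ I).toReal with hm
    set e : ℝ := (μ (E ∩ I)).toReal with he
    have hm0 : 0 < m := ENNReal.toReal_pos hμpos.ne' hIfin.ne
    have hEIfin : μ (E ∩ I) < ⊤ := lt_of_le_of_lt (measure_mono Set.inter_subset_right) hIfin
    have hem : e ≤ m :=
      ENNReal.toReal_le_toReal hEIfin.ne hIfin.ne |>.mpr (measure_mono Set.inter_subset_right)
    have he0 : 0 ≤ e := ENNReal.toReal_nonneg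
    -- compute the integral
    have hint : ∫ y in I, |f y| ∂μ = (1 - γ) * e + γ * m := by
      have h1 : ∀ y, |f y| = f y := fun y => abs_of_nonneg (hfnonneg y)
      calc ∫ y in I, |f y| ∂μ = ∫ y in I, (E.indicator (fun _ => 1 - γ) y + γ) ∂μ := by
            refine integral_congr_ae (Filter.Eventually.of_forall fun y => ?_)
            dsimp only
            rw [h1, hfval]
        _ = (∫ y in I, E.indicator (fun _ => 1 - γ) y ∂μ) + ∫ y in I, γ ∂μ := by
            refine integral_add ?_ (integrable_const γ)
            exact (integrable_const (1 - γ)).indicator hE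
        _ = (1 - γ) * e + γ * m := by
            rw [integral_indicator hE, Measure.restrict_restrict hE, setIntegral_const,
              setIntegral_const, smul_eq_mul, smul_eq_mul, measureReal_def, measureReal_def, ← he, ← hm]
            ring
    rw [hint] at hr
    -- derive the measure inequality
    have hαm : α * m < (1 - γ) * e + γ * m := by
      have : α < ((1 - γ) * e + γ * m) / m := by
        rw [div_eq_inv_mul]; rw [hr] at hαr; exact hαr
      exact (lt_div_iff₀ hm0).mp this
    have hkey : m - e ≤ c * e := by
      have h2 : (α - γ) * (m - e) ≤ (1 - α) * e := by nlinarith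
      rw [hc, div_mul_eq_mul_div, le_div_iff₀ hαγ]
      nlinarith
    -- (a, b) is a good interval
    have hgood : (a, b) ∈ 𝒞 := by
      refine ⟨hab, ?_⟩
      have hdiff : μ (I \ E) = μ I - μ (E ∩ I) := by
        rw [← Set.diff_inter_self_eq_diff (t := E)]
        exact measure_diff Set.inter_subset_right (hE.inter measurableSet_Ioo).nullMeasurableSet
          hEIfin.ne
      have htoReal : (μ (I \ E)).toReal = m - e := by
        rw [hdiff, ENNReal.toReal_sub_of_le (measure_mono Set.inter_subset_right) hIfin.ne]
      have hfin' : μ (I \ E) < ⊤ := lt_of_le_of_lt (measure_mono Set.diff_subset) hIfin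
      calc μ (Set.Ioo a b \ E) = ENNReal.ofReal (m - e) := by
            rw [← htoReal, ENNReal.ofReal_toReal hfin'.ne]
        _ ≤ ENNReal.ofReal (c * e) := ENNReal.ofReal_le_ofReal hkey
        _ = ENNReal.ofReal c * μ (E ∩ Set.Ioo a b) := by
            rw [ENNReal.ofReal_mul hc0, he, ENNReal.ofReal_toReal hEIfin.ne]
    exact Set.mem_biUnion hgood hxab
  -- Step B: bound μ U
  have hUopen : IsOpen U := isOpen_biUnion fun _ _ => isOpen_Ioo
  have hUbound : μ U ≤ ENNReal.ofReal (1 + 2 * c) * μ E := by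
    rw [hUopen.measure_eq_iSup_isCompact]
    refine iSup_le fun K => iSup_le fun hKU => iSup_le fun hK => ?_
    -- finite subcover
    have hKU' : K ⊆ ⋃ p : 𝒞, Set.Ioo (p : ℝ × ℝ).1 (p : ℝ × ℝ).2 := by
      refine hKU.trans ?_
      rw [hU, Set.biUnion_eq_iUnion]
    obtain ⟨s, hs⟩ := hK.elim_finite_subcover
      (fun p : 𝒞 => Set.Ioo (p : ℝ × ℝ).1 (p : ℝ × ℝ).2) (fun _ => isOpen_Ioo) hKU'
    obtain ⟨t, hts, huni, hmult⟩ :=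
      solyanik_mult2 (fun p : 𝒞 => (p : ℝ × ℝ).1) (fun p : 𝒞 => (p : ℝ × ℝ).2) s
    set V : Set ℝ := ⋃ i ∈ t, Set.Ioo (i : ℝ × ℝ).1 (i : ℝ × ℝ).2 with hVdef
    have hKV : K ⊆ V := by rw [huni]; exact hs
    have hstep : μ (K \ E) ≤ ENNReal.ofReal c * (2 * μ E) := by
      calc μ (K \ E) ≤ μ (V \ E) := measure_mono (Set.diff_subset_diff_left hKV)
        _ ≤ ∑ i ∈ t, μ (Set.Ioo (i : ℝ × ℝ).1 (i : ℝ × ℝ).2 \ E) := by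
            refine le_trans (measure_mono ?_) (measure_biUnion_finset_le t _)
            rw [hVdef]
            intro y hy
            obtain ⟨hyV, hyE⟩ := hy
            simp only [Set.mem_iUnion] at hyV ⊢
            obtain ⟨i, hi, hyi⟩ := hyV
            exact ⟨i, hi, hyi, hyE⟩
        _ ≤ ∑ i ∈ t, ENNReal.ofReal c * μ (E ∩ Set.Ioo (i : ℝ × ℝ).1 (i : ℝ × ℝ).2) :=
            Finset.sum_le_sum fun i _ => i.2.2
        _ = ENNReal.ofReal c * ∑ i ∈ t, μ (E ∩ Set.Ioo (i : ℝ × ℝ).1 (i : ℝ × ℝ).2) :=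
            (Finset.mul_sum _ _ _).symm
        _ ≤ ENNReal.ofReal c * (2 * μ (E ∩ V)) := by
            refine mul_le_mul_right ?_ _
            exact solyanik_sum_le μ E hE _ _ t hmult
        _ ≤ ENNReal.ofReal c * (2 * μ E) := by
            refine mul_le_mul_right (mul_le_mul_right (measure_mono Set.inter_subset_left) _) _
    calc μ K ≤ μ (K ∩ E) + μ (K \ E) := measure_le_inter_add_diff μ K E
      _ ≤ μ E + ENNReal.ofReal c * (2 * μ E) :=
          add_le_add (measure_mono Set.inter_subset_right) hstep
      _ = ENNReal.ofReal (1 + 2 * c) * μ E := by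
          rw [ENNReal.ofReal_add (by norm_num) (by positivity), ENNReal.ofReal_one,
            ENNReal.ofReal_mul (by norm_num), ENNReal.ofReal_ofNat]
          ring
  calc μ {x | α < Mmu μ f x} ≤ μ U := measure_mono hsub
    _ ≤ ENNReal.ofReal (1 + 2 * c) * μ E := hUbound
    _ = ENNReal.ofReal (1 + 2 * (1 - α) / (α - γ)) * μ E := by rw [hc, mul_div_assoc]
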